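/- Let Λ > 0 and define the 4×4 complex matrices 𝔯 := √Λ (J₁ ⊗ J₂ − J₂ ⊗ J₁) and r₋ := −(τ₁ ⊗ J₁ + τ₂ ⊗ J₂ + τ₃ ⊗ J₃). Then for every h ∈ SU(2), the identity [𝔯, h ⊗ h] = −[r₋, h ⊗ h] holds; equivalently, 𝔯 + r₋ commutes with h ⊗ h for every h ∈ SU(2). -/

import Mathlib

open Matrix Kronecker

/-- `h` is an element of SU(2): a 2×2 complex matrix with `h†h = 1` and `det h = 1`. -/
def isSU2 (h : Matrix (Fin 2) (Fin 2) ℂ) : Prop :=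
  h.conjTranspose * h = 1 ∧ h.det = 1

/-- The (halved) Pauli matrices σ₁, σ₂, σ₃. -/
noncomputable def sigM : Fin 3 → Matrix (Fin 2) (Fin 2) ℂ :=
  ![(1 / 2 : ℂ) • !![0, 1; 1, 0],
    (1 / 2 : ℂ) • !![0, -Complex.I; Complex.I, 0],
    (1 / 2 : ℂ) • !![1, 0; 0, -1]]

/-- The rotation generators `J_I := -i σ_I`. -/
noncomputable def Jmat : Fin 3 → Matrix (Fin 2) (Fin 2) ℂ :=
  fun I => (-Complex.I) • sigM I

/-- The matrices ξ₁, ξ₂, ξ₃. -/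
noncomputable def xiM : Fin 3 → Matrix (Fin 2) (Fin 2) ℂ :=
  ![!![0, 0; Complex.I, 0],
    !![0, 0; -1, 0],
    (Complex.I / 2) • !![1, 0; 0, -1]]

/-- The translation generators `τ_I := i √Λ ξ_I`. -/
noncomputable def tauM (Λ : ℝ) : Fin 3 → Matrix (Fin 2) (Fin 2) ℂ :=
  fun I => (Complex.I * (Real.sqrt Λ : ℂ)) • xiM I

/-- The little r-matrix `𝔯 := √Λ (J₁ ⊗ J₂ − J₂ ⊗ J₁)`. -/
noncomputable def rFrak (Λ : ℝ) : Matrix (Fin 2 × Fin 2) (Fin 2 × Fin 2) ℂ :=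
  (Real.sqrt Λ : ℂ) • (Jmat 0 ⊗ₖ Jmat 1 - Jmat 1 ⊗ₖ Jmat 0)

/-- The r-matrix `r₋ := −(τ₁ ⊗ J₁ + τ₂ ⊗ J₂ + τ₃ ⊗ J₃)`. -/
noncomputable def rMinus (Λ : ℝ) : Matrix (Fin 2 × Fin 2) (Fin 2 × Fin 2) ℂ :=
  -(tauM Λ 0 ⊗ₖ Jmat 0 + tauM Λ 1 ⊗ₖ Jmat 1 + tauM Λ 2 ⊗ₖ Jmat 2)

/-- The swap (flip) matrix on `ℂ² ⊗ ℂ²`. -/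
def swapM : Matrix (Fin 2 × Fin 2) (Fin 2 × Fin 2) ℂ :=
  Matrix.of fun p q => if p.1 = q.2 ∧ p.2 = q.1 then 1 else 0

lemma swapM_mul_kron (a b : Matrix (Fin 2) (Fin 2) ℂ) :
    swapM * (a ⊗ₖ b) = (b ⊗ₖ a) * swapM := by
  ext ⟨i, j⟩ ⟨k, l⟩
  simp [Matrix.mul_apply, Fintype.sum_prod_type, swapM, Fin.sum_univ_succ,
    Matrix.kroneckerMap_apply]
  fin_cases i <;> fin_cases j <;> fin_cases k <;> fin_cases l <;> simp <;> ring

set_option maxHeartbeats 1000000 in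
lemma key (Λ : ℝ) :
    rFrak Λ + rMinus Λ
      = (Real.sqrt Λ : ℂ) • ((Complex.I / 4) • (1 : Matrix (Fin 2 × Fin 2) (Fin 2 × Fin 2) ℂ)
          - (Complex.I / 2) • swapM) := by
  ext ⟨i, j⟩ ⟨k, l⟩
  fin_cases i <;> fin_cases j <;> fin_cases k <;> fin_cases l <;>
    (simp [rFrak, rMinus, tauM, Jmat, sigM, xiM, swapM, Matrix.one_apply,
        Matrix.kroneckerMap_apply, Prod.ext_iff]; try ring_nf)
  all_goals rw [(by ring : Complex.I ^ 3 = Complex.I ^ 2 * Complex.I), Complex.I_sq]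
  all_goals ring

/-- For every `h ∈ SU(2)`, `[𝔯, h⊗h] = −[r₋, h⊗h]`. -/
theorem little_r_matrix_group (Λ : ℝ) (hΛ : 0 < Λ)
    (h : Matrix (Fin 2) (Fin 2) ℂ) (hh : isSU2 h) :
    rFrak Λ * (h ⊗ₖ h) - (h ⊗ₖ h) * rFrak Λ
      = -(rMinus Λ * (h ⊗ₖ h) - (h ⊗ₖ h) * rMinus Λ) := by
  have hS : (rFrak Λ + rMinus Λ) * (h ⊗ₖ h) = (h ⊗ₖ h) * (rFrak Λ + rMinus Λ) := by
    rw [key, Matrix.smul_mul, Matrix.mul_smul, Matrix.sub_mul, Matrix.mul_sub,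
      Matrix.smul_mul, Matrix.mul_smul, Matrix.smul_mul, Matrix.mul_smul,
      Matrix.one_mul, Matrix.mul_one, swapM_mul_kron]
  have hS' : rFrak Λ * (h ⊗ₖ h) + rMinus Λ * (h ⊗ₖ h)
      = (h ⊗ₖ h) * rFrak Λ + (h ⊗ₖ h) * rMinus Λ := by
    rw [← Matrix.add_mul, ← Matrix.mul_add, hS]
  rw [neg_sub, sub_eq_sub_iff_add_eq_add, hS']
  exact add_comm _ _
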